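/- Let $0<\mu<1$, $0\le\lambda<1$, and $\varepsilon>0$ with $\mu+\varepsilon<1$. Set $\bar\mu=1-\mu$ and $\Delta = 1+\frac{4\lambda(\mu+\varepsilon)(\bar\mu-\varepsilon)}{\mu\bar\mu(1-\lambda)^2}$. Then the following inequality holds: $\left[\frac{\mu+\bar\mu\lambda}{1-2\frac{\bar\mu-\varepsilon}{1+\sqrt{\Delta}}}\right]^{\mu+\varepsilon}\left[\frac{\bar\mu+\mu\lambda}{1-2\frac{\mu+\varepsilon}{1+\sqrt{\Delta}}}\right]^{\bar\mu-\varepsilon} \le \exp\left(-2\frac{1-\lambda}{1+\lambda}\varepsilon^2\right). -/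

import Mathlib

open Real Set

noncomputable def ath (x : ℝ) : ℝ := (Real.log (1+x) - Real.log (1-x))/2

lemma ath_zero : ath 0 = 0 := by simp [ath]

lemma ath_odd (x : ℝ) : ath (-x) = - ath x := by
  unfold ath
  rw [show (1:ℝ) + -x = 1 - x by ring, show (1:ℝ) - -x = 1 + x by ring]
  ring

lemma ath_hasDerivAt {x : ℝ} (h1 : -1 < x) (h2 : x < 1) :
    HasDerivAt ath (1/(1-x^2)) x := by
  have d1 : HasDerivAt (fun y : ℝ => 1 + y) 1 x := by
    simpa using (hasDerivAt_id x).const_add (1:ℝ)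
  have d2 : HasDerivAt (fun y : ℝ => 1 - y) (-1) x := by
    simpa using (hasDerivAt_id x).const_sub (1:ℝ)
  have l1 : HasDerivAt (fun y : ℝ => Real.log (1+y)) ((1+x)⁻¹ * 1) x :=
    (Real.hasDerivAt_log (by linarith)).comp x d1
  have l2 : HasDerivAt (fun y : ℝ => Real.log (1-y)) ((1-x)⁻¹ * (-1)) x :=
    (Real.hasDerivAt_log (by linarith)).comp x d2
  have := (l1.sub l2).div_const 2
  refine HasDerivAt.congr_deriv this (Eq.symm ?_)
  have hx1 : (1:ℝ) + x ≠ 0 := by linarith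
  have hx2 : (1:ℝ) - x ≠ 0 := by linarith
  have hx3 : (1:ℝ) - x^2 ≠ 0 := by nlinarith
  field_simp
  ring

lemma mono_aux {f f' : ℝ → ℝ} {a b : ℝ} (hab : a ≤ b)
    (hd : ∀ x ∈ Icc a b, HasDerivAt f (f' x) x)
    (h0 : ∀ x ∈ Icc a b, 0 ≤ f' x) : f a ≤ f b := by
  have hmono : MonotoneOn f (Icc a b) := by
    apply monotoneOn_of_hasDerivWithinAt_nonneg (convex_Icc a b)
      (fun x hx => (hd x hx).continuousAt.continuousWithinAt)
      (fun x hx => ((hd x (interior_subset hx)).hasDerivWithinAt))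
      (fun x hx => h0 x (interior_subset hx))
  exact hmono (left_mem_Icc.2 hab) (right_mem_Icc.2 hab) hab

lemma self_le_ath {x : ℝ} (h0 : 0 ≤ x) (h1 : x < 1) : x ≤ ath x := by
  have := mono_aux (f := fun y => ath y - y) (f' := fun y => 1/(1-y^2) - 1) h0
    (fun y hy => ((ath_hasDerivAt (by cases hy; linarith) (by cases hy; linarith)).sub (hasDerivAt_id y)))
    (fun y hy => by
      obtain ⟨hy0, hy1⟩ := hy
      have h : 0 < 1 - y^2 := by nlinarith
      have : 1 ≤ 1/(1-y^2) := by
        rw [le_div_iff₀ h]; nlinarith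
      linarith)
  simp [ath_zero] at this
  linarith

noncomputable def Tf (A B x : ℝ) : ℝ := Real.sqrt B / Real.sqrt (A*(1-x^2)+B)
noncomputable def psif (A B x : ℝ) : ℝ := ath (x * Tf A B x)
noncomputable def Wf (A B x : ℝ) : ℝ := x * psif A B x - ath (Tf A B x)

section TW
variable {A B x : ℝ} (hA : 0 < A) (hB : 0 < B)

lemma Qpos (hA : 0 < A) (hB : 0 < B) (hx : x^2 ≤ 1) : 0 < A*(1-x^2)+B := by nlinarith

lemma Tf_pos (hA : 0 < A) (hB : 0 < B) (hx : x^2 ≤ 1) : 0 < Tf A B x := by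
  have h := Qpos hA hB hx
  exact div_pos (Real.sqrt_pos.2 hB) (Real.sqrt_pos.2 h)

lemma Tf_le_one (hA : 0 < A) (hB : 0 < B) (hx : x^2 ≤ 1) : Tf A B x ≤ 1 := by
  have h := Qpos hA hB hx
  rw [Tf, div_le_one (Real.sqrt_pos.2 h)]
  apply Real.sqrt_le_sqrt; nlinarith

lemma Tf_lt_one (hA : 0 < A) (hB : 0 < B) (hx : x^2 < 1) : Tf A B x < 1 := by
  have h := Qpos hA hB hx.le
  rw [Tf, div_lt_one (Real.sqrt_pos.2 h)]
  apply Real.sqrt_lt_sqrt hB.le; nlinarith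

lemma Tf_sq (hA : 0 < A) (hB : 0 < B) (hx : x^2 ≤ 1) :
    (Tf A B x)^2 = B / (A*(1-x^2)+B) := by
  have h := Qpos hA hB hx
  rw [Tf, div_pow, Real.sq_sqrt hB.le, Real.sq_sqrt h.le]

lemma Tf_even (A B x : ℝ) : Tf A B (-x) = Tf A B x := by simp [Tf]

lemma Tf_mono (hA : 0 < A) (hB : 0 < B) {y : ℝ} (h0 : 0 ≤ x) (hxy : x ≤ y) (hy : y^2 ≤ 1) :
    Tf A B x ≤ Tf A B y := by
  have hx2 : x^2 ≤ 1 := by nlinarith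
  have hQy := Qpos hA hB hy
  have hQx := Qpos hA hB hx2
  apply div_le_div_of_nonneg_left (Real.sqrt_nonneg B) (Real.sqrt_pos.2 hQy)
  apply Real.sqrt_le_sqrt
  nlinarith [mul_nonneg hA.le (mul_nonneg (sub_nonneg.2 hxy) (by linarith : (0:ℝ) ≤ y + x))]

lemma Tf_hasDerivAt (hA : 0 < A) (hB : 0 < B) (hx : x^2 < 1) :
    HasDerivAt (fun y => Tf A B y) (A * x * Tf A B x / (A*(1-x^2)+B)) x := by
  have hQ : 0 < A*(1-x^2)+B := Qpos hA hB hx.le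
  have hsQ : 0 < Real.sqrt (A*(1-x^2)+B) := Real.sqrt_pos.2 hQ
  have hQne : A*(1-x^2)+B ≠ 0 := hQ.ne'
  have d1 : HasDerivAt (fun y : ℝ => A*(1-y^2)+B) (A * (0 - 2*x^1)) x := by
    exact (((hasDerivAt_const x (1:ℝ)).sub (hasDerivAt_pow 2 x)).const_mul A).add_const B
  have d2 : HasDerivAt (fun y : ℝ => Real.sqrt (A*(1-y^2)+B))
      (1/(2*Real.sqrt (A*(1-x^2)+B)) * (A * (0 - 2*x^1))) x :=
    (Real.hasDerivAt_sqrt hQne).comp x d1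
  have d3 := (d2.inv hsQ.ne').const_mul (Real.sqrt B)
  have heq : ∀ y : ℝ, Tf A B y = Real.sqrt B * (Real.sqrt (A*(1-y^2)+B))⁻¹ := by
    intro y; rw [Tf, div_eq_mul_inv]
  rw [show (fun y => Tf A B y) = fun y => Real.sqrt B * (Real.sqrt (A*(1-y^2)+B))⁻¹ from funext heq]
  refine HasDerivAt.congr_deriv d3 (Eq.symm ?_)
  rw [Tf]
  have hs2 : Real.sqrt (A*(1-x^2)+B) ^ 2 = A*(1-x^2)+B := Real.sq_sqrt hQ.le
  field_simp
  linear_combination (2*x) * hs2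


lemma xT_mem (hA : 0 < A) (hB : 0 < B) (hx1 : -1 < x) (hx2 : x < 1) :
    -1 < x * Tf A B x ∧ x * Tf A B x < 1 := by
  have hsq : x^2 < 1 := by nlinarith
  have h1 := Tf_pos hA hB hsq.le
  have h2 := Tf_lt_one hA hB hsq
  constructor <;> nlinarith

lemma psif_hasDerivAt (hA : 0 < A) (hB : 0 < B) (hx1 : -1 < x) (hx2 : x < 1) :
    HasDerivAt (fun y => psif A B y) (Tf A B x / (1-x^2)) x := by
  have hsq : x^2 < 1 := by nlinarith
  have hQ : 0 < A*(1-x^2)+B := Qpos hA hB hsq.le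
  obtain ⟨hu1, hu2⟩ := xT_mem hA hB hx1 hx2
  have dT := Tf_hasDerivAt hA hB hsq
  have dinner : HasDerivAt (fun y => y * Tf A B y)
      (1 * Tf A B x + x * (A * x * Tf A B x / (A*(1-x^2)+B))) x :=
    (hasDerivAt_id x).mul dT
  have dath := (ath_hasDerivAt hu1 hu2).comp x dinner
  have heq : (fun y => psif A B y) = (fun y => ath (y * Tf A B y)) := by
    funext y; rw [psif]
  rw [heq]
  refine HasDerivAt.congr_deriv dath (Eq.symm ?_)
  have hT2 : (Tf A B x)^2 = B / (A*(1-x^2)+B) := Tf_sq hA hB hsq.le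
  have hQT : (Tf A B x)^2 * (A*(1-x^2)+B) = B := by rw [hT2]; field_simp
  have hden : (1:ℝ) - (x * Tf A B x)^2 ≠ 0 := by nlinarith
  have hx3 : (1:ℝ) - x^2 ≠ 0 := by nlinarith
  have hQ2 : (1 - x^2)*A + B ≠ 0 := (by nlinarith : 0 < (1 - x^2)*A + B).ne'
  have hden2 : 1 - Tf A B x^2 * x^2 ≠ 0 := by nlinarith
  field_simp
  linear_combination (-(Tf A B x * x^2)) * hQT

lemma Wf_hasDerivAt (hA : 0 < A) (hB : 0 < B) (hx1 : -1 < x) (hx2 : x < 1) :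
    HasDerivAt (fun y => Wf A B y) (psif A B x) x := by
  have hsq : x^2 < 1 := by nlinarith
  have hQ : 0 < A*(1-x^2)+B := Qpos hA hB hsq.le
  have hT0 := Tf_pos hA hB hsq.le
  have hT1 := Tf_lt_one hA hB hsq
  have dT := Tf_hasDerivAt hA hB hsq
  have dpsi := psif_hasDerivAt hA hB hx1 hx2
  have dathT := (ath_hasDerivAt (by linarith) hT1).comp x dT
  have heq : (fun y => Wf A B y) = (fun y => y * psif A B y - ath (Tf A B y)) := by
    funext y; rw [Wf]
  rw [heq]
  have dcomb := ((hasDerivAt_id x).mul dpsi).sub dathT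
  refine HasDerivAt.congr_deriv dcomb (Eq.symm ?_)
  have hT2 : (Tf A B x)^2 = B / (A*(1-x^2)+B) := Tf_sq hA hB hsq.le
  have hQT : (Tf A B x)^2 * (A*(1-x^2)+B) = B := by rw [hT2]; field_simp
  have hdenT : (1:ℝ) - (Tf A B x)^2 ≠ 0 := by nlinarith
  have hx3 : (1:ℝ) - x^2 ≠ 0 := by nlinarith
  have hQ2 : (1 - x^2)*A + B ≠ 0 := (by nlinarith : 0 < (1 - x^2)*A + B).ne'
  simp only [id_eq]
  field_simp
  linear_combination (Tf A B x * x) * hQT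


lemma psif_odd (A B x : ℝ) : psif A B (-x) = - psif A B x := by
  rw [psif, psif, Tf_even, show -x * Tf A B x = -(x * Tf A B x) by ring, ath_odd]

lemma Wf_even (A B x : ℝ) : Wf A B (-x) = Wf A B x := by
  rw [Wf, Wf, Tf_even, psif_odd]; ring

lemma psif_zero (A B : ℝ) : psif A B 0 = 0 := by
  rw [psif, zero_mul, ath_zero]

lemma psif_nonneg (hA : 0 < A) (hB : 0 < B) (hx0 : 0 ≤ x) (hx1 : x < 1) :
    0 ≤ psif A B x := by
  have hsq : x^2 < 1 := by nlinarith
  have h1 := Tf_pos hA hB hsq.le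
  have h2 := Tf_lt_one hA hB hsq
  have hu0 : 0 ≤ x * Tf A B x := by positivity
  have hu1 : x * Tf A B x < 1 := by nlinarith
  exact le_trans hu0 (self_le_ath hu0 hu1)

lemma psid_mono (hA : 0 < A) (hB : 0 < B) {y : ℝ} (h0 : 0 ≤ x) (hxy : x ≤ y) (hy : y < 1) :
    Tf A B x / (1-x^2) ≤ Tf A B y / (1-y^2) := by
  have hy2 : y^2 < 1 := by nlinarith
  have hx2 : x^2 ≤ 1 := by nlinarith
  have hT := Tf_mono hA hB h0 hxy hy2.le
  have hTx := Tf_pos hA hB hx2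
  have h2 : (0:ℝ) < 1 - y^2 := by nlinarith
  have h3 : 1 - y^2 ≤ 1 - x^2 := by nlinarith
  exact div_le_div₀ (by linarith) hT h2 h3

-- slope lemma: psi b - psi a ≤ (b-a) * psi'(b)  for 0 ≤ a ≤ b < 1
lemma SL (hA : 0 < A) (hB : 0 < B) {a b : ℝ} (ha : 0 ≤ a) (hab : a ≤ b) (hb : b < 1) :
    psif A B b - psif A B a ≤ (b-a) * (Tf A B b / (1-b^2)) := by
  have h := mono_aux (f := fun y => y * (Tf A B b / (1-b^2)) - psif A B y)
      (f' := fun y => Tf A B b / (1-b^2) - Tf A B y / (1-y^2)) hab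
      (fun y hy => by
        obtain ⟨h1, h2⟩ := hy
        have hder := ((hasDerivAt_id y).mul_const (Tf A B b / (1-b^2))).sub
          (psif_hasDerivAt hA hB (by linarith) (by linarith))
        refine HasDerivAt.congr_deriv hder (Eq.symm ?_); ring)
      (fun y hy => by
        obtain ⟨h1, h2⟩ := hy
        have := psid_mono hA hB (by linarith : (0:ℝ) ≤ y) h2 hb
        linarith)
  linarith [h]

-- chord: W b - W a ≤ (b-a)(psi b + psi a)/2 for 0 ≤ a ≤ b < 1
lemma chord (hA : 0 < A) (hB : 0 < B) {a b : ℝ} (ha : 0 ≤ a) (hab : a ≤ b) (hb : b < 1) :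
    Wf A B b - Wf A B a ≤ (b-a) * (psif A B b + psif A B a) / 2 := by
  have h := mono_aux (f := fun y => (y-a) * (psif A B y + psif A B a) / 2 - (Wf A B y - Wf A B a))
      (f' := fun y => ((psif A B y + psif A B a) + (y-a) * (Tf A B y / (1-y^2))) / 2 - psif A B y)
      hab
      (fun y hy => by
        obtain ⟨h1, h2⟩ := hy
        have d1 : HasDerivAt (fun y => (y-a) * (psif A B y + psif A B a))
            (1 * (psif A B y + psif A B a) + (y-a) * (Tf A B y / (1-y^2))) y := by
          exact (((hasDerivAt_id y).sub_const a)).mul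
            ((psif_hasDerivAt hA hB (by linarith) (by linarith)).add_const _)
        have d2 := (Wf_hasDerivAt hA hB (by linarith : -1 < y) (by linarith)).sub_const (Wf A B a)
        have := (d1.div_const 2).sub d2
        refine HasDerivAt.congr_deriv this (Eq.symm ?_)
        ring
      )
      (fun y hy => by
        obtain ⟨h1, h2⟩ := hy
        have hsl := SL hA hB (by linarith : (0:ℝ) ≤ a) h1 (by linarith : y < 1)
        linarith)
  simp only [sub_self, zero_mul, zero_div, sub_zero] at h
  linarith [h]

-- slope through zero: d * psi e ≤ e * psi d for 0 ≤ e ≤ d < 1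
lemma slope0 (hA : 0 < A) (hB : 0 < B) {e d : ℝ} (he : 0 ≤ e) (hed : e ≤ d) (hd : d < 1) :
    d * psif A B e ≤ e * psif A B d := by
  rcases eq_or_lt_of_le he with rfl | he0
  · simp [psif_zero]
  · have h := mono_aux (f := fun y => psif A B y / y)
        (f' := fun y => (Tf A B y / (1-y^2) * y - psif A B y) / y^2) hed
        (fun y hy => by
          obtain ⟨h1, h2⟩ := hy
          have hder := (psif_hasDerivAt hA hB (by linarith) (by linarith)).div
            (hasDerivAt_id y) (by simpa using (lt_of_lt_of_le he0 h1).ne')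
          refine HasDerivAt.congr_deriv hder (Eq.symm ?_); simp only [id_eq]; ring
        )
        (fun y hy => by
          obtain ⟨h1, h2⟩ := hy
          have hsl := SL hA hB le_rfl (by linarith : (0:ℝ) ≤ y) (by linarith : y < 1)
          rw [psif_zero] at hsl
          have hy2 : (0:ℝ) < y^2 := pow_pos (lt_of_lt_of_le he0 h1) 2
          apply div_nonneg _ hy2.le
          linarith [hsl])
    have he' : 0 < e := he0
    have hd' : 0 < d := by linarith
    rw [div_le_div_iff₀ he' hd'] at h
    linarith [h]


-- Case A helper: for 0 ≤ D ≤ e < 1 with Tf D = c ≥ 0: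
lemma caseA_aux (hA : 0 < A) (hB : 0 < B) {c D e : ℝ} (hc0 : 0 ≤ c)
    (hD0 : 0 ≤ D) (hDe : D ≤ e) (he1 : e < 1) (hTD : Tf A B D = c) :
    Wf A B D + (e-D) * psif A B D + c*(e-D)^2/2 ≤ Wf A B e := by
  have hA1 : ∀ x ∈ Icc D e, psif A B D + c*(x-D) ≤ psif A B x := by
    intro x hx
    obtain ⟨hx1, hx2⟩ := hx
    have h := mono_aux (f := fun y => psif A B y - c*y)
        (f' := fun y => Tf A B y / (1-y^2) - c) hx1
        (fun y hy => by
          obtain ⟨hy1, hy2⟩ := hy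
          have hder := (psif_hasDerivAt hA hB (by linarith) (by linarith)).sub
            ((hasDerivAt_id y).const_mul c)
          refine HasDerivAt.congr_deriv hder (Eq.symm ?_); ring)
        (fun y hy => by
          obtain ⟨hy1, hy2⟩ := hy
          have hy0 : 0 ≤ y := le_trans hD0 hy1
          have hyl : y < 1 := by linarith
          have hy2' : y^2 < 1 := by nlinarith
          have hTm : c ≤ Tf A B y := hTD ▸ Tf_mono hA hB hD0 hy1 hy2'.le
          have hTp := Tf_pos hA hB hy2'.le
          have h1 : (0:ℝ) < 1 - y^2 := by nlinarith
          have : Tf A B y ≤ Tf A B y / (1-y^2) := by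
            rw [le_div_iff₀ h1]; nlinarith
          linarith)
    linarith
  have h := mono_aux (f := fun y => Wf A B y - y * psif A B D - c*(y-D)^2/2)
      (f' := fun y => psif A B y - psif A B D - c*(y-D)) hDe
      (fun y hy => by
        obtain ⟨hy1, hy2⟩ := hy
        have hy0 : 0 ≤ y := le_trans hD0 hy1
        have d1 := Wf_hasDerivAt hA hB (by linarith : -1 < y) (by linarith)
        have d2 : HasDerivAt (fun y : ℝ => y * psif A B D) (psif A B D) y := by
          simpa using (hasDerivAt_id y).mul_const (psif A B D)
        have d3 : HasDerivAt (fun y : ℝ => c*(y-D)^2/2) (c*(2*(y-D)^1*1)/2) y := by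
          exact ((((hasDerivAt_id y).sub_const D).pow 2).const_mul c).div_const 2
        have hder := (d1.sub d2).sub d3
        refine HasDerivAt.congr_deriv hder (Eq.symm ?_); ring)
      (fun y hy => by
        have := hA1 y hy
        show 0 ≤ psif A B y - psif A B D - c*(y-D)
        linarith)
  linarith [h]

lemma arithC {c d e wE wd pd pE : ℝ} (hd : 0 < d) (hE : -e < d)
    (hch : wd - wE ≤ (d - -e)*(pd + pE)/2) (hsl : d * pE ≤ -e * pd) (hP1 : c*d ≤ pd) :
    (d+e)*(c*(d+e)/2 - pd) ≤ wE - wd := by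
  have hde : (0:ℝ) ≤ d + e := by linarith
  have h0 : (d+e)*(c*d) ≤ (d+e)*pd := mul_le_mul_of_nonneg_left hP1 hde
  have h1 : d*(c*(d - -e)) ≤ d*(pd - pE) := by nlinarith [hsl, h0]
  have h1' : c*(d - -e) ≤ pd - pE := le_of_mul_le_mul_left h1 hd
  have h2 : (d+e)*(c*(d+e)) ≤ (d+e)*(pd - pE) :=
    mul_le_mul_of_nonneg_left (by linarith [h1'] : c*(d+e) ≤ pd - pE) hde
  nlinarith [hch, h2]

lemma arithB {c d e we wd pd pe : ℝ} (hd : 0 < d) (he : 0 ≤ e) (hed : e ≤ d)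
    (hch : wd - we ≤ (d-e)*(pd+pe)/2) (hsl : d*pe ≤ e*pd) (hP1 : c*d ≤ pd) :
    (d+e)*(c*(d+e)/2 - pd) ≤ we - wd := by
  have h1 : (d-e)*(d*pe) ≤ (d-e)*(e*pd) := mul_le_mul_of_nonneg_left hsl (by linarith)
  have h2 : (d+e)^2*(c*d) ≤ (d+e)^2*pd := mul_le_mul_of_nonneg_left hP1 (sq_nonneg _)
  have h3 : 0 ≤ 2*d*((d+e)*pd - c*(d+e)^2/2 - (d-e)*(pd+pe)/2) := by nlinarith [h1, h2]
  have h4 : 0 ≤ (d+e)*pd - c*(d+e)^2/2 - (d-e)*(pd+pe)/2 := by nlinarith [h3, hd]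
  linarith [hch, h4]

set_option maxHeartbeats 1000000 in
lemma key (c d e t : ℝ) (hc0 : 0 < c) (hc1 : c < 1) (hd0 : -1 < d) (hd1 : d < 1)
    (he0 : -1 < e) (he1 : e < 1) (hde : 0 < d + e) (ht0 : 0 < t) (ht1 : t < 1)
    (hcon : (1-c^2)*(1-e^2)*t^2 = c^2*(1-d^2)*(1-t^2)) :
    ath t - ath c - e * ath (e*t) - e * ath (d*c) + c*(d+e)^2/2 ≤ 0 := by
  set A := 1 - c^2 with hAdef
  set B := c^2*(1-d^2) with hBdef
  have hA : 0 < A := by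
    rw [hAdef]
    linarith [mul_pos (show (0:ℝ)<1-c by linarith) (show (0:ℝ)<1+c by linarith)]
  have hB : 0 < B := by
    rw [hBdef]
    have h1 : (0:ℝ) < 1 - d^2 := by
      linarith [mul_pos (show (0:ℝ)<1-d by linarith) (show (0:ℝ)<1+d by linarith)]
    exact mul_pos (pow_pos hc0 2) h1
  have hQe : 0 < A*(1-e^2)+B := Qpos hA hB (by linarith [mul_pos (show (0:ℝ)<1-e by linarith) (show (0:ℝ)<1+e by linarith)])
  have hQd : 0 < A*(1-d^2)+B := Qpos hA hB (by linarith [mul_pos (show (0:ℝ)<1-d by linarith) (show (0:ℝ)<1+d by linarith)])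
  -- Tf A B e = t
  have hBt : B = t^2*(A*(1-e^2)+B) := by rw [hAdef, hBdef]; linear_combination -hcon
  have hTe : Tf A B e = t := by
    have hs : Real.sqrt B = t * Real.sqrt (A*(1-e^2)+B) := by
      nth_rewrite 1 [hBt]
      rw [Real.sqrt_mul (sq_nonneg t), Real.sqrt_sq ht0.le]
    rw [Tf, hs, mul_div_assoc, div_self (Real.sqrt_pos.2 hQe).ne', mul_one]
  -- Tf A B d = c
  have hBc : B = c^2*(A*(1-d^2)+B) := by rw [hAdef, hBdef]; ring
  have hTd : Tf A B d = c := by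
    have hs : Real.sqrt B = c * Real.sqrt (A*(1-d^2)+B) := by
      nth_rewrite 1 [hBc]
      rw [Real.sqrt_mul (sq_nonneg c), Real.sqrt_sq hc0.le]
    rw [Tf, hs, mul_div_assoc, div_self (Real.sqrt_pos.2 hQd).ne', mul_one]
  have hpsie : psif A B e = ath (e*t) := by rw [psif, hTe]
  have hpsid : psif A B d = ath (d*c) := by rw [psif, hTd]
  have hWe : Wf A B e = e * ath (e*t) - ath t := by rw [Wf, hpsie, hTe]
  have hWd : Wf A B d = d * ath (d*c) - ath c := by rw [Wf, hpsid, hTd]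
  -- main claim
  have main : Wf A B e - Wf A B d ≥ (d+e) * (c*(d+e)/2 - ath (d*c)) := by
    have hcd1 : c*d < 1 := by
      have h := mul_lt_mul_of_pos_left hd1 hc0
      linarith [h]
    rcases lt_or_ge e 0 with heneg | hepos
    · -- Case C : e < 0, set E := -e, 0 < E < d
      have hdpos : 0 < d := by linarith
      have hP1 : c*d ≤ ath (d*c) := by
        rw [mul_comm d c]; exact self_le_ath (by positivity) hcd1
      have hE1 : -e < d := by linarith
      have hE0 : 0 < -e := by linarith
      have hWeE : Wf A B e = Wf A B (-e) := (Wf_even A B e).symm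
      have hch := chord hA hB hE0.le hE1.le hd1
      have hsl := slope0 hA hB hE0.le hE1.le hd1
      rw [hWeE, ← hpsid]
      rw [← hpsid] at hP1
      exact arithC hdpos hE1 hch hsl hP1
    · -- e ≥ 0
      rcases lt_or_ge e d with hed | hde'
      · -- Case B : 0 ≤ e < d
        have hdpos : 0 < d := by linarith
        have hP1 : c*d ≤ ath (d*c) := by
          rw [mul_comm d c]; exact self_le_ath (by positivity) hcd1
        have hch := chord hA hB hepos hed.le hd1
        have hsl := slope0 hA hB hepos hed.le hd1
        rw [← hpsid]
        rw [← hpsid] at hP1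
        exact arithB hdpos hepos hed.le hch hsl hP1
      · -- Case A : d ≤ e
        rcases le_or_gt 0 d with hdpos | hdneg
        · have hP1 : c*d ≤ ath (d*c) := by
            rw [mul_comm d c]; exact self_le_ath (by positivity) hcd1
          have hca := caseA_aux hA hB hc0.le hdpos hde' he1 hTd
          rw [← hpsid]
          rw [← hpsid] at hP1
          have h4 : 0 ≤ e*(psif A B d - c*d) :=
            mul_nonneg (le_trans hdpos hde') (by linarith)
          linarith [hca, h4]
        · -- d < 0
          have hTnd : Tf A B (-d) = c := by rw [Tf_even]; exact hTd
          have hca := caseA_aux hA hB hc0.le (by linarith : (0:ℝ) ≤ -d)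
            (by linarith : -d ≤ e) he1 hTnd
          have hWnd : Wf A B (-d) = Wf A B d := Wf_even A B d
          have hpsind : psif A B (-d) = - psif A B d := psif_odd A B d
          rw [hWnd, hpsind] at hca
          rw [← hpsid]
          linarith [hca]
  rw [hWe, hWd] at main
  linarith [main]

end TW

lemma pinsker {m p : ℝ} (hm : 0 < m) (hmp : m < p) (hp1 : p < 1) :
    Real.log (m/p) * p + Real.log ((1-m)/(1-p)) * (1-p) ≤ -(2*(p-m)^2) := by
  have hp0 : 0 < p := lt_trans hm hmp
  have hq0 : (0:ℝ) < 1 - p := by linarith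
  have h := mono_aux
      (f := fun x => (Real.log x - Real.log p) * p + (Real.log (1-x) - Real.log (1-p)) * (1-p)
        + 2*(p-x)^2)
      (f' := fun x => x⁻¹ * p - (1-x)⁻¹ * (1-p) - 4*(p-x)) hmp.le
      (fun x hx => by
        obtain ⟨h1, h2⟩ := hx
        have hx0 : 0 < x := lt_of_lt_of_le hm h1
        have hx1 : x < 1 := by linarith
        have d1 : HasDerivAt (fun x : ℝ => (Real.log x - Real.log p) * p) (x⁻¹ * p) x :=
          ((Real.hasDerivAt_log hx0.ne').sub_const _).mul_const p
        have d2 : HasDerivAt (fun x : ℝ => 1 - x) (-1) x := by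
          simpa using (hasDerivAt_id x).const_sub (1:ℝ)
        have d3 : HasDerivAt (fun x : ℝ => (Real.log (1-x) - Real.log (1-p)) * (1-p))
            (((1-x)⁻¹ * -1) * (1-p)) x :=
          (((Real.hasDerivAt_log (by linarith)).comp x d2).sub_const _).mul_const _
        have d4 : HasDerivAt (fun x : ℝ => 2*(p-x)^2) (2*(2*(p-x)^1*(-1))) x := by
          exact ((((hasDerivAt_id x).const_sub p)).pow 2).const_mul 2
        have hder := (d1.add d3).add d4
        refine HasDerivAt.congr_deriv hder (Eq.symm ?_); ring)
      (fun x hx => by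
        obtain ⟨h1, h2⟩ := hx
        have hx0 : 0 < x := lt_of_lt_of_le hm h1
        have hx1 : x < 1 := by linarith
        have heq : x⁻¹ * p - (1-x)⁻¹ * (1-p) - 4*(p-x) = (p-x)*(1-2*x)^2/(x*(1-x)) := by
          have hxne : x ≠ 0 := hx0.ne'
          have hx1ne : (1:ℝ) - x ≠ 0 := by linarith
          rw [eq_div_iff (mul_ne_zero hxne hx1ne)]
          field_simp
          ring
        show 0 ≤ x⁻¹ * p - (1-x)⁻¹ * (1-p) - 4*(p-x)
        rw [heq]
        apply div_nonneg (mul_nonneg (by linarith) (sq_nonneg _))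
          (mul_nonneg hx0.le (by linarith)))
  simp only [sub_self, zero_mul, zero_add, mul_zero] at h
  have hfp : (Real.log p - Real.log p) * p + (Real.log (1-p) - Real.log (1-p)) * (1-p)
      + 2*(p-p)^2 = 0 := by ring
  rw [Real.log_div hm.ne' hp0.ne', Real.log_div (by linarith : (1:ℝ)-m ≠ 0) hq0.ne']
  linarith [h]

lemma bridge (c d e t : ℝ) (h1 : 0 < 1+t) (h2 : 0 < 1-t) (h3 : 0 < 1+c) (h4 : 0 < 1-c)
    (h5 : 0 < 1+e*t) (h6 : 0 < 1-e*t) (h7 : 0 < 1+d*c) (h8 : 0 < 1-d*c)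
    (hXY : ((1-d*c)*(1+d*c))*((1-t)*(1+t)) = ((1-c)*(1+c))*((1-e*t)*(1+e*t))) :
    Real.log ((1-d*c)/(1+c) / ((1+e*t)/(1+t))) * ((1+e)/2)
    + Real.log ((1+d*c)/(1+c) / ((1-e*t)/(1+t))) * ((1-e)/2)
    = ath t - ath c - e * ath (e*t) - e * ath (d*c) := by
  have hsum : (Real.log (1-d*c) + Real.log (1+d*c)) + (Real.log (1-t) + Real.log (1+t))
      = (Real.log (1-c) + Real.log (1+c)) + (Real.log (1-e*t) + Real.log (1+e*t)) := by
    rw [← Real.log_mul h8.ne' h7.ne', ← Real.log_mul h2.ne' h1.ne',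
        ← Real.log_mul (by positivity) (by positivity),
        ← Real.log_mul h4.ne' h3.ne', ← Real.log_mul h6.ne' h5.ne',
        ← Real.log_mul (by positivity) (by positivity), hXY]
  rw [Real.log_div (by positivity) (by positivity)]
  rw [Real.log_div (by positivity) (by positivity)]
  rw [Real.log_div (by positivity) (by positivity)]
  rw [Real.log_div (by positivity) (by positivity)]
  rw [Real.log_div (by positivity) (by positivity)]
  rw [Real.log_div (by positivity) (by positivity)]
  unfold ath
  linear_combination (1/2) * hsum


set_option maxHeartbeats 1000000 in
/-- León–Perron analytic inequality: the optimized Chernoff bound for the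
two-state chain is below the Hoeffding-type bound `exp(-2 ((1-λ)/(1+λ)) ε²)`. -/
theorem hoeffding_stmt16
    (μ lam ε : ℝ) (hμ0 : 0 < μ) (hμ1 : μ < 1) (hlam0 : 0 ≤ lam) (hlam1 : lam < 1)
    (hε : 0 < ε) (hμε : μ + ε < 1)
    (μbar Δ : ℝ) (hμbar : μbar = 1 - μ)
    (hΔ : Δ = 1 + 4 * lam * (μ + ε) * (μbar - ε) / (μ * μbar * (1 - lam) ^ 2)) :
    ((μ + μbar * lam) / (1 - 2 * (μbar - ε) / (1 + Real.sqrt Δ))) ^ (μ + ε) *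
      ((μbar + μ * lam) / (1 - 2 * (μ + ε) / (1 + Real.sqrt Δ))) ^ (μbar - ε)
    ≤ Real.exp (-2 * ((1 - lam) / (1 + lam)) * ε ^ 2) := by
  subst hμbar
  subst hΔ
  have hp0 : 0 < μ + ε := by linarith
  have hq0 : 0 < 1 - μ - ε := by linarith
  have hμb0 : 0 < 1 - μ := by linarith
  have hl1 : 0 < 1 - lam := by linarith
  have hl2 : 0 < 1 + lam := by linarith
  obtain ⟨D, hD⟩ : ∃ x : ℝ, x = 1 + 4 * lam * (μ + ε) * (1 - μ - ε) / (μ * (1 - μ) * (1 - lam) ^ 2) :=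
    ⟨_, rfl⟩
  rw [← hD]
  have hDnn : 1 ≤ D := by
    rw [hD]
    have h0 : 0 ≤ 4 * lam * (μ + ε) * (1 - μ - ε) / (μ * (1 - μ) * (1 - lam) ^ 2) :=
      div_nonneg (by positivity) (by positivity)
    linarith
  obtain ⟨R, hR⟩ : ∃ x : ℝ, x = Real.sqrt D := ⟨_, rfl⟩
  rw [← hR]
  have hR1 : 1 ≤ R := by
    rw [hR]
    have := Real.sqrt_le_sqrt hDnn
    simpa using this
  have hR0 : 0 < R := lt_of_lt_of_le one_pos hR1
  have h1R : 0 < 1 + R := by linarith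
  have hu0 : 0 < 1 - 2*(1 - μ - ε)/(1+R) := by
    have h2 : 2*(1-μ-ε)/(1+R) ≤ (1-μ-ε) := by
      rw [div_le_iff₀ h1R]
      linarith [mul_nonneg hq0.le (by linarith : (0:ℝ) ≤ R - 1)]
    linarith
  have hv0 : 0 < 1 - 2*(μ+ε)/(1+R) := by
    have h2 : 2*(μ+ε)/(1+R) ≤ (μ+ε) := by
      rw [div_le_iff₀ h1R]
      linarith [mul_nonneg hp0.le (by linarith : (0:ℝ) ≤ R - 1)]
    linarith
  have ha0 : 0 < μ + (1-μ)*lam := by linarith [mul_nonneg (by linarith : (0:ℝ) ≤ 1-μ) hlam0]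
  have hb0 : 0 < (1-μ) + μ*lam := by linarith [mul_nonneg hμ0.le hlam0]
  rw [Real.rpow_def_of_pos (div_pos ha0 hu0), Real.rpow_def_of_pos (div_pos hb0 hv0),
      ← Real.exp_add, Real.exp_le_exp]
  rcases eq_or_lt_of_le hlam0 with hlam | hlam
  · -- lam = 0
    have hD1 : D = 1 := by rw [hD, ← hlam]; norm_num
    have hRe : R = 1 := by rw [hR, hD1, Real.sqrt_one]
    rw [hRe, ← hlam]
    have e1 : 1 - 2*(1 - μ - ε)/(1+(1:ℝ)) = μ + ε := by ring
    have e2 : 1 - 2*(μ + ε)/(1+(1:ℝ)) = 1 - μ - ε := by ring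
    have e3 : μ + (1-μ)*(0:ℝ) = μ := by ring
    have e4 : (1-μ) + μ*(0:ℝ) = 1-μ := by ring
    rw [e1, e2, e3, e4]
    have hpk := pinsker hμ0 (show μ < μ+ε by linarith) hμε
    rw [show (1:ℝ)-(μ+ε) = 1-μ-ε by ring] at hpk
    rw [show (μ+ε)-μ = ε by ring] at hpk
    have hrhs : -2*(((1:ℝ)-0)/(1+0))*ε^2 = -(2*ε^2) := by norm_num
    rw [hrhs]
    exact hpk
  · -- 0 < lam
    obtain ⟨c, hc⟩ : ∃ x : ℝ, x = (1-lam)/(1+lam) := ⟨_, rfl⟩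
    obtain ⟨d, hd⟩ : ∃ x : ℝ, x = 1-2*μ := ⟨_, rfl⟩
    obtain ⟨e, he⟩ : ∃ x : ℝ, x = 2*(μ+ε)-1 := ⟨_, rfl⟩
    obtain ⟨t, ht⟩ : ∃ x : ℝ, x = 1/R := ⟨_, rfl⟩
    rw [show (1-lam)/(1+lam) = c from hc.symm]
    have hc0 : 0 < c := by rw [hc]; exact div_pos hl1 hl2
    have hc1 : c < 1 := by rw [hc, div_lt_one hl2]; linarith
    have hd0 : -1 < d := by rw [hd]; linarith
    have hd1 : d < 1 := by rw [hd]; linarith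
    have he0 : -1 < e := by rw [he]; linarith
    have he1 : e < 1 := by rw [he]; linarith
    have hde : 0 < d + e := by rw [hd, he]; linarith
    have hDgt : 1 < D := by
      rw [hD]
      have h0 : 0 < 4 * lam * (μ + ε) * (1 - μ - ε) / (μ * (1 - μ) * (1 - lam) ^ 2) := by
        apply div_pos
        · have := mul_pos (mul_pos (mul_pos (by norm_num : (0:ℝ) < 4) hlam) hp0) hq0
          linarith [this]
        · positivity
      linarith
    have hRgt : 1 < R := by
      rw [hR]
      have := Real.sqrt_lt_sqrt (by norm_num : (0:ℝ) ≤ 1) hDgt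
      simpa using this
    have ht0 : 0 < t := by rw [ht]; positivity
    have ht1 : t < 1 := by rw [ht, div_lt_one hR0]; exact hRgt
    have hR2 : R^2 = D := by rw [hR]; exact Real.sq_sqrt (by linarith : (0:ℝ) ≤ D)
    have hR2m : R^2 * (μ*(1-μ)*(1-lam)^2) = μ*(1-μ)*(1-lam)^2 + 4*lam*(μ+ε)*(1-μ-ε) := by
      rw [hR2, hD]
      field_simp
    have hRne : R ≠ 0 := hR0.ne'
    have hstep : (1-c^2)*(1-e^2) = c^2*(1-d^2)*(R^2-1) := by
      have h2 : R^2 - 1 = 4*lam*(μ+ε)*(1-μ-ε)/(μ*(1-μ)*(1-lam)^2) := by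
        rw [hR2, hD]; ring
      rw [hc, hd, he, h2]
      have h1 : ((1:ℝ)+lam) ≠ 0 := hl2.ne'
      field_simp
      ring
    have hcon : (1-c^2)*(1-e^2)*t^2 = c^2*(1-d^2)*(1-t^2) := by
      rw [ht]
      field_simp
      linear_combination hstep
    have hae : μ + (1-μ)*lam = (1-d*c)/(1+c) := by
      rw [hd, hc]
      have h1 : ((1:ℝ)+lam) ≠ 0 := hl2.ne'
      have h2 : (1-lam)/(1+lam) + 1 ≠ 0 := by
        have : 0 < (1-lam)/(1+lam) + 1 := by positivity
        linarith
      field_simp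
      ring
    have hbe : (1-μ) + μ*lam = (1+d*c)/(1+c) := by
      rw [hd, hc]
      have h1 : ((1:ℝ)+lam) ≠ 0 := hl2.ne'
      have h2 : (1-lam)/(1+lam) + 1 ≠ 0 := by
        have : 0 < (1-lam)/(1+lam) + 1 := by positivity
        linarith
      field_simp
      ring
    have hue : 1 - 2*(1-μ-ε)/(1+R) = (1+e*t)/(1+t) := by
      rw [he, ht]
      have h2 : 1/R + 1 ≠ 0 := by
        have : 0 < 1/R + 1 := by positivity
        linarith
      field_simp
      ring
    have hve : 1 - 2*(μ+ε)/(1+R) = (1-e*t)/(1+t) := by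
      rw [he, ht]
      have h2 : 1/R + 1 ≠ 0 := by
        have : 0 < 1/R + 1 := by positivity
        linarith
      field_simp
      ring
    have h1t : 0 < 1+t := by linarith
    have h2t : 0 < 1-t := by linarith
    have h3 : 0 < 1+c := by linarith
    have h4 : 0 < 1-c := by linarith
    have h5 : 0 < 1+e*t := by linarith [mul_pos (show (0:ℝ) < 1+e by linarith) ht0]
    have h6 : 0 < 1-e*t := by linarith [mul_pos (show (0:ℝ) < 1-e by linarith) ht0]
    have h7 : 0 < 1+d*c := by linarith [mul_pos (show (0:ℝ) < 1+d by linarith) hc0]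
    have h8 : 0 < 1-d*c := by linarith [mul_pos (show (0:ℝ) < 1-d by linarith) hc0]
    have hXY : ((1-d*c)*(1+d*c))*((1-t)*(1+t)) = ((1-c)*(1+c))*((1-e*t)*(1+e*t)) := by
      linear_combination (-1:ℝ) * hcon
    rw [hae, hbe, hue, hve]
    rw [show μ+ε = (1+e)/2 by rw [he]; ring, show 1-μ-ε = (1-e)/2 by rw [he]; ring]
    rw [bridge c d e t h1t h2t h3 h4 h5 h6 h7 h8 hXY]
    have hk := key c d e t hc0 hc1 hd0 hd1 he0 he1 hde ht0 ht1 hcon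
    have hde2 : d + e = 2*ε := by rw [hd, he]; ring
    rw [hde2] at hk
    have hfin : -2*c*ε^2 = -(c*(2*ε)^2/2) := by ring
    linarith [hk]
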